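/- Pattern equivalence is compatible with disjoint union of labeled collections: if p₁ ⊑ v₁, p₂ ⊑ v₂, v₁ ∼_{p₁} v₁', and v₂ ∼_{p₂} v₂', then v₁ ⊎ v₂ ∼_{p₁ ⊎ p₂} v₁' ⊎ v₂', provided all the disjoint unions are defined. -/
import Mathlib


abbrev Label := List ℕ
abbrev FName := String

/-- Values: constants, records, and labeled collections
(finite maps from labels to values, represented as association lists). -/
inductive Value : Type where
  | int : ℤ → Value
  | bool : Bool → Value
  | record : List (FName × Value) → Value
  | coll : List (Label × Value) → Value

/-- `ℓ · v` : prepend `ℓ` to every label of a labeled collection. -/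
def relabel (ℓ : Label) (ws : List (Label × Value)) : List (Label × Value) :=
  ws.map fun q => (ℓ ++ q.1, q.2)

def IsPrefixCode (L : Set Label) : Prop :=
  ∀ x ∈ L, ∀ y ∈ L, x <+: y → x = y

def PrefixDisjoint (L₁ L₂ : Set Label) : Prop :=
  (∀ x ∈ L₁, ∀ y ∈ L₂, ¬ x <+: y) ∧ (∀ x ∈ L₂, ∀ y ∈ L₁, ¬ x <+: y)

def domOf {β : Type*} (ws : List (Label × β)) : Set Label :=
  {ℓ | ∃ b, (ℓ, b) ∈ ws}

def SubPrefixCode (L' L : Set Label) : Prop :=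
  IsPrefixCode L' ∧ ∀ x ∈ L, ∃ y ∈ L', y <+: x

/-- Enriched patterns: holes □, equality markers ◇, constants, complete and
partial record patterns, and complete and partial set patterns
(`collHole ps` is `{ℓᵢ.pᵢ} ∪̇ □`, `collDiamond ps` is `{ℓᵢ.pᵢ} ∪̇ ◇`,
and similarly for records). -/
inductive Pattern : Type where
  | hole : Pattern
  | diamond : Pattern
  | int : ℤ → Pattern
  | bool : Bool → Pattern
  | rcd : List (FName × Pattern) → Pattern
  | rcdHole : List (FName × Pattern) → Pattern
  | rcdDiamond : List (FName × Pattern) → Pattern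
  | coll : List (Label × Pattern) → Pattern
  | collHole : List (Label × Pattern) → Pattern
  | collDiamond : List (Label × Pattern) → Pattern

namespace Pattern

/-- The substitution `p[◇/□]`, replacing every hole by ◇. -/
def subst : Pattern → Pattern
  | .hole => .diamond
  | .diamond => .diamond
  | .int n => .int n
  | .bool b => .bool b
  | .rcd ps => .rcd (ps.attach.map fun q => (q.1.1, subst q.1.2))
  | .rcdHole ps => .rcdDiamond (ps.attach.map fun q => (q.1.1, subst q.1.2))
  | .rcdDiamond ps => .rcdDiamond (ps.attach.map fun q => (q.1.1, subst q.1.2))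
  | .coll ps => .coll (ps.attach.map fun q => (q.1.1, subst q.1.2))
  | .collHole ps => .collDiamond (ps.attach.map fun q => (q.1.1, subst q.1.2))
  | .collDiamond ps => .collDiamond (ps.attach.map fun q => (q.1.1, subst q.1.2))
decreasing_by
  all_goals
    have h := List.sizeOf_lt_of_mem q.2
    simp only [Pattern.rcd.sizeOf_spec, Pattern.rcdHole.sizeOf_spec,
      Pattern.rcdDiamond.sizeOf_spec, Pattern.coll.sizeOf_spec,
      Pattern.collHole.sizeOf_spec, Pattern.collDiamond.sizeOf_spec]
    have h2 : sizeOf (q.1.2) < sizeOf q.1 := by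
      obtain ⟨⟨a, b⟩, _⟩ := q
      simp
    omega

end Pattern

/-! The matching relation `p ⊑ v` (pattern `p` matches value `v`). -/
mutual
inductive Matches : Pattern → Value → Prop where
  | hole : ∀ {v}, Matches .hole v
  | diamond : ∀ {v}, Matches .diamond v
  | int : ∀ {n}, Matches (.int n) (.int n)
  | bool : ∀ {b}, Matches (.bool b) (.bool b)
  | rcd : ∀ {ps vs}, MatchesListF ps vs → Matches (.rcd ps) (.record vs)
  | rcdHole : ∀ {ps vs}, MatchesSubF ps vs → Matches (.rcdHole ps) (.record vs)
  | rcdDiamond : ∀ {ps vs}, MatchesSubF ps vs → Matches (.rcdDiamond ps) (.record vs)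
  | coll : ∀ {ps ws}, MatchesListC ps ws → Matches (.coll ps) (.coll ws)
  | collHole : ∀ {ps ws}, MatchesSubC ps ws → Matches (.collHole ps) (.coll ws)
  | collDiamond : ∀ {ps ws}, MatchesSubC ps ws → Matches (.collDiamond ps) (.coll ws)

inductive MatchesListF : List (FName × Pattern) → List (FName × Value) → Prop where
  | nil : MatchesListF [] []
  | cons : ∀ {A p ps v vs}, Matches p v → MatchesListF ps vs →
      MatchesListF ((A, p) :: ps) ((A, v) :: vs)

/-- Matching of a partial record/set pattern: the listed components match,
and the value may have further components. -/
inductive MatchesSubF : List (FName × Pattern) → List (FName × Value) → Prop where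
  | nil : MatchesSubF [] []
  | skip : ∀ {ps A v vs}, MatchesSubF ps vs → MatchesSubF ps ((A, v) :: vs)
  | cons : ∀ {A p ps v vs}, Matches p v → MatchesSubF ps vs →
      MatchesSubF ((A, p) :: ps) ((A, v) :: vs)

inductive MatchesListC : List (Label × Pattern) → List (Label × Value) → Prop where
  | nil : MatchesListC [] []
  | cons : ∀ {ℓ p ps v ws}, Matches p v → MatchesListC ps ws →
      MatchesListC ((ℓ, p) :: ps) ((ℓ, v) :: ws)

inductive MatchesSubC : List (Label × Pattern) → List (Label × Value) → Prop where
  | nil : MatchesSubC [] []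
  | skip : ∀ {ps ℓ v ws}, MatchesSubC ps ws → MatchesSubC ps ((ℓ, v) :: ws)
  | cons : ∀ {ℓ p ps v ws}, Matches p v → MatchesSubC ps ws →
      MatchesSubC ((ℓ, p) :: ps) ((ℓ, v) :: ws)
end

/-! The relation `v ∼_p v'` (values `v` and `v'` are equal modulo pattern `p`,
Figure 8). -/
mutual
inductive Sim : Pattern → Value → Value → Prop where
  | hole : ∀ {v v'}, Sim .hole v v'
  | diamond : ∀ {v}, Sim .diamond v v
  | int : ∀ {n}, Sim (.int n) (.int n) (.int n)
  | bool : ∀ {b}, Sim (.bool b) (.bool b) (.bool b)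
  | rcd : ∀ {ps vs vs'}, SimListF ps vs vs' → Sim (.rcd ps) (.record vs) (.record vs')
  | rcdHole : ∀ {ps vs vs'}, SimSubF ps vs vs' →
      Sim (.rcdHole ps) (.record vs) (.record vs')
  | rcdDiamond : ∀ {ps vs vs'}, SimSubEqF ps vs vs' →
      Sim (.rcdDiamond ps) (.record vs) (.record vs')
  | coll : ∀ {ps ws ws'}, SimListC ps ws ws' → Sim (.coll ps) (.coll ws) (.coll ws')
  | collHole : ∀ {ps ws ws'}, SimSubC ps ws ws' →
      Sim (.collHole ps) (.coll ws) (.coll ws')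
  | collDiamond : ∀ {ps ws ws'}, SimSubEqC ps ws ws' →
      Sim (.collDiamond ps) (.coll ws) (.coll ws')

inductive SimListF : List (FName × Pattern) → List (FName × Value) →
    List (FName × Value) → Prop where
  | nil : SimListF [] [] []
  | cons : ∀ {A p ps v v' vs vs'}, Sim p v v' → SimListF ps vs vs' →
      SimListF ((A, p) :: ps) ((A, v) :: vs) ((A, v') :: vs')

/-- Partial pattern with □ remainder: the listed components are related
pointwise and the remaining components on both sides are arbitrary. -/
inductive SimSubF : List (FName × Pattern) → List (FName × Value) →
    List (FName × Value) → Prop where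
  | nil : SimSubF [] [] []
  | skipL : ∀ {ps A v vs vs'}, SimSubF ps vs vs' → SimSubF ps ((A, v) :: vs) vs'
  | skipR : ∀ {ps A v' vs vs'}, SimSubF ps vs vs' → SimSubF ps vs ((A, v') :: vs')
  | cons : ∀ {A p ps v v' vs vs'}, Sim p v v' → SimSubF ps vs vs' →
      SimSubF ((A, p) :: ps) ((A, v) :: vs) ((A, v') :: vs')

/-- Partial pattern with ◇ remainder: the listed components are related
pointwise and the remaining components must be equal. -/
inductive SimSubEqF : List (FName × Pattern) → List (FName × Value) →
    List (FName × Value) → Prop where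
  | nil : SimSubEqF [] [] []
  | skip : ∀ {ps A v vs vs'}, SimSubEqF ps vs vs' →
      SimSubEqF ps ((A, v) :: vs) ((A, v) :: vs')
  | cons : ∀ {A p ps v v' vs vs'}, Sim p v v' → SimSubEqF ps vs vs' →
      SimSubEqF ((A, p) :: ps) ((A, v) :: vs) ((A, v') :: vs')

inductive SimListC : List (Label × Pattern) → List (Label × Value) →
    List (Label × Value) → Prop where
  | nil : SimListC [] [] []
  | cons : ∀ {ℓ p ps v v' ws ws'}, Sim p v v' → SimListC ps ws ws' →
      SimListC ((ℓ, p) :: ps) ((ℓ, v) :: ws) ((ℓ, v') :: ws')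

inductive SimSubC : List (Label × Pattern) → List (Label × Value) →
    List (Label × Value) → Prop where
  | nil : SimSubC [] [] []
  | skipL : ∀ {ps ℓ v ws ws'}, SimSubC ps ws ws' → SimSubC ps ((ℓ, v) :: ws) ws'
  | skipR : ∀ {ps ℓ v' ws ws'}, SimSubC ps ws ws' → SimSubC ps ws ((ℓ, v') :: ws')
  | cons : ∀ {ℓ p ps v v' ws ws'}, Sim p v v' → SimSubC ps ws ws' →
      SimSubC ((ℓ, p) :: ps) ((ℓ, v) :: ws) ((ℓ, v') :: ws')

inductive SimSubEqC : List (Label × Pattern) → List (Label × Value) →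
    List (Label × Value) → Prop where
  | nil : SimSubEqC [] [] []
  | skip : ∀ {ps ℓ v ws ws'}, SimSubEqC ps ws ws' →
      SimSubEqC ps ((ℓ, v) :: ws) ((ℓ, v) :: ws')
  | cons : ∀ {ℓ p ps v v' ws ws'}, Sim p v v' → SimSubEqC ps ws ws' →
      SimSubEqC ((ℓ, p) :: ps) ((ℓ, v) :: ws) ((ℓ, v') :: ws')
end

/-! The least upper bound `p ⊔ p'` of patterns (Figures 6 and 7),
presented as a relation `Lub p p' r` meaning `p ⊔ p' = r`. -/
mutual
inductive Lub : Pattern → Pattern → Pattern → Prop where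
  | holeL : ∀ {p}, Lub .hole p p
  | holeR : ∀ {p}, Lub p .hole p
  | diamondL : ∀ {p}, Lub .diamond p p.subst
  | diamondR : ∀ {p}, Lub p .diamond p.subst
  | int : ∀ {n}, Lub (.int n) (.int n) (.int n)
  | bool : ∀ {b}, Lub (.bool b) (.bool b) (.bool b)
  -- records
  | rcdCC : ∀ {ps qs rs}, LubListF ps qs rs → Lub (.rcd ps) (.rcd qs) (.rcd rs)
  | rcdCH : ∀ {ps qs rs}, LubSubF id ps qs rs →
      Lub (.rcd ps) (.rcdHole qs) (.rcd rs)
  | rcdHC : ∀ {ps qs rs}, LubSubF id qs ps rs →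
      Lub (.rcdHole ps) (.rcd qs) (.rcd rs)
  | rcdCD : ∀ {ps qs rs}, LubSubF Pattern.subst ps qs rs →
      Lub (.rcd ps) (.rcdDiamond qs) (.rcd rs)
  | rcdDC : ∀ {ps qs rs}, LubSubF Pattern.subst qs ps rs →
      Lub (.rcdDiamond ps) (.rcd qs) (.rcd rs)
  | rcdHH : ∀ {ps qs rs}, LubMergeF id id ps qs rs →
      Lub (.rcdHole ps) (.rcdHole qs) (.rcdHole rs)
  | rcdHD : ∀ {ps qs rs}, LubMergeF Pattern.subst id ps qs rs →
      Lub (.rcdHole ps) (.rcdDiamond qs) (.rcdDiamond rs)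
  | rcdDH : ∀ {ps qs rs}, LubMergeF id Pattern.subst ps qs rs →
      Lub (.rcdDiamond ps) (.rcdHole qs) (.rcdDiamond rs)
  | rcdDD : ∀ {ps qs rs}, LubMergeF Pattern.subst Pattern.subst ps qs rs →
      Lub (.rcdDiamond ps) (.rcdDiamond qs) (.rcdDiamond rs)
  -- labeled sets
  | collCC : ∀ {ps qs rs}, LubListC ps qs rs → Lub (.coll ps) (.coll qs) (.coll rs)
  | collCH : ∀ {ps qs rs}, LubSubC id ps qs rs →
      Lub (.coll ps) (.collHole qs) (.coll rs)
  | collHC : ∀ {ps qs rs}, LubSubC id qs ps rs →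
      Lub (.collHole ps) (.coll qs) (.coll rs)
  | collCD : ∀ {ps qs rs}, LubSubC Pattern.subst ps qs rs →
      Lub (.coll ps) (.collDiamond qs) (.coll rs)
  | collDC : ∀ {ps qs rs}, LubSubC Pattern.subst qs ps rs →
      Lub (.collDiamond ps) (.coll qs) (.coll rs)
  | collHH : ∀ {ps qs rs}, LubMergeC id id ps qs rs →
      Lub (.collHole ps) (.collHole qs) (.collHole rs)
  | collHD : ∀ {ps qs rs}, LubMergeC Pattern.subst id ps qs rs →
      Lub (.collHole ps) (.collDiamond qs) (.collDiamond rs)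
  | collDH : ∀ {ps qs rs}, LubMergeC id Pattern.subst ps qs rs →
      Lub (.collDiamond ps) (.collHole qs) (.collDiamond rs)
  | collDD : ∀ {ps qs rs}, LubMergeC Pattern.subst Pattern.subst ps qs rs →
      Lub (.collDiamond ps) (.collDiamond qs) (.collDiamond rs)

/-- Pointwise lub of complete pattern lists (same domain). -/
inductive LubListF : List (FName × Pattern) → List (FName × Pattern) →
    List (FName × Pattern) → Prop where
  | nil : LubListF [] [] []
  | cons : ∀ {A p q r ps qs rs}, Lub p q r → LubListF ps qs rs →
      LubListF ((A, p) :: ps) ((A, q) :: qs) ((A, r) :: rs)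

/-- Lub of a complete pattern list (first argument) against a partial one
whose components are all among the complete one's; the extra components
of the complete side are transformed by `f` (`id` for □, `·[◇/□]` for ◇). -/
inductive LubSubF : (Pattern → Pattern) → List (FName × Pattern) →
    List (FName × Pattern) → List (FName × Pattern) → Prop where
  | nil : ∀ {f}, LubSubF f [] [] []
  | extra : ∀ {f A p ps qs rs}, LubSubF f ps qs rs →
      LubSubF f ((A, p) :: ps) qs ((A, f p) :: rs)
  | cons : ∀ {f A p q r ps qs rs}, Lub p q r → LubSubF f ps qs rs →
      LubSubF f ((A, p) :: ps) ((A, q) :: qs) ((A, r) :: rs)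

/-- Lub of two partial pattern lists: shared components are combined with
`Lub`, extra components on the left/right are transformed by `f`/`g`. -/
inductive LubMergeF : (Pattern → Pattern) → (Pattern → Pattern) →
    List (FName × Pattern) → List (FName × Pattern) →
    List (FName × Pattern) → Prop where
  | nil : ∀ {f g}, LubMergeF f g [] [] []
  | left : ∀ {f g A p ps qs rs}, LubMergeF f g ps qs rs →
      LubMergeF f g ((A, p) :: ps) qs ((A, f p) :: rs)
  | right : ∀ {f g A q ps qs rs}, LubMergeF f g ps qs rs →
      LubMergeF f g ps ((A, q) :: qs) ((A, g q) :: rs)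
  | both : ∀ {f g A p q r ps qs rs}, Lub p q r → LubMergeF f g ps qs rs →
      LubMergeF f g ((A, p) :: ps) ((A, q) :: qs) ((A, r) :: rs)

inductive LubListC : List (Label × Pattern) → List (Label × Pattern) →
    List (Label × Pattern) → Prop where
  | nil : LubListC [] [] []
  | cons : ∀ {ℓ p q r ps qs rs}, Lub p q r → LubListC ps qs rs →
      LubListC ((ℓ, p) :: ps) ((ℓ, q) :: qs) ((ℓ, r) :: rs)

inductive LubSubC : (Pattern → Pattern) → List (Label × Pattern) →
    List (Label × Pattern) → List (Label × Pattern) → Prop where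
  | nil : ∀ {f}, LubSubC f [] [] []
  | extra : ∀ {f ℓ p ps qs rs}, LubSubC f ps qs rs →
      LubSubC f ((ℓ, p) :: ps) qs ((ℓ, f p) :: rs)
  | cons : ∀ {f ℓ p q r ps qs rs}, Lub p q r → LubSubC f ps qs rs →
      LubSubC f ((ℓ, p) :: ps) ((ℓ, q) :: qs) ((ℓ, r) :: rs)

inductive LubMergeC : (Pattern → Pattern) → (Pattern → Pattern) →
    List (Label × Pattern) → List (Label × Pattern) →
    List (Label × Pattern) → Prop where
  | nil : ∀ {f g}, LubMergeC f g [] [] []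
  | left : ∀ {f g ℓ p ps qs rs}, LubMergeC f g ps qs rs →
      LubMergeC f g ((ℓ, p) :: ps) qs ((ℓ, f p) :: rs)
  | right : ∀ {f g ℓ q ps qs rs}, LubMergeC f g ps qs rs →
      LubMergeC f g ps ((ℓ, q) :: qs) ((ℓ, g q) :: rs)
  | both : ∀ {f g ℓ p q r ps qs rs}, Lub p q r → LubMergeC f g ps qs rs →
      LubMergeC f g ((ℓ, p) :: ps) ((ℓ, q) :: qs) ((ℓ, r) :: rs)
end

/-- The pattern order: `p ⊑ p'` is defined as `p ⊔ p' = p'`. -/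
def PLE (p p' : Pattern) : Prop := Lub p p' p'

/-- Disjoint union `p ⊎ p'` of set patterns (Figure 5),
as a relation `PUnion p p' r`.  Defined only when the domains are
prefix-disjoint. -/
inductive PUnion : Pattern → Pattern → Pattern → Prop where
  | hh : PUnion .hole .hole .hole
  | hd : PUnion .hole .diamond .hole
  | dh : PUnion .diamond .hole .hole
  | dd : PUnion .diamond .diamond .diamond
  | collH : ∀ {ps}, PUnion (.coll ps) .hole (.collHole ps)
  | hColl : ∀ {ps}, PUnion .hole (.coll ps) (.collHole ps)
  | collD : ∀ {ps}, PUnion (.coll ps) .diamond (.collDiamond ps)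
  | dColl : ∀ {ps}, PUnion .diamond (.coll ps) (.collDiamond ps)
  | collHoleH : ∀ {ps}, PUnion (.collHole ps) .hole (.collHole ps)
  | hCollHole : ∀ {ps}, PUnion .hole (.collHole ps) (.collHole ps)
  | collDiamondH : ∀ {ps}, PUnion (.collDiamond ps) .hole (.collHole ps)
  | hCollDiamond : ∀ {ps}, PUnion .hole (.collDiamond ps) (.collHole ps)
  | collDiamondD : ∀ {ps}, PUnion (.collDiamond ps) .diamond (.collDiamond ps)
  | dCollDiamond : ∀ {ps}, PUnion .diamond (.collDiamond ps) (.collDiamond ps)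
  | collHoleD : ∀ {ps}, PUnion (.collHole ps) .diamond (.collHole ps)
  | dCollHole : ∀ {ps}, PUnion .diamond (.collHole ps) (.collHole ps)
  | cc : ∀ {ps qs}, PrefixDisjoint (domOf ps) (domOf qs) →
      PUnion (.coll ps) (.coll qs) (.coll (ps ++ qs))
  | cch : ∀ {ps qs}, PrefixDisjoint (domOf ps) (domOf qs) →
      PUnion (.coll ps) (.collHole qs) (.collHole (ps ++ qs))
  | chc : ∀ {ps qs}, PrefixDisjoint (domOf ps) (domOf qs) →
      PUnion (.collHole ps) (.coll qs) (.collHole (ps ++ qs))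
  | ccd : ∀ {ps qs}, PrefixDisjoint (domOf ps) (domOf qs) →
      PUnion (.coll ps) (.collDiamond qs) (.collDiamond (ps ++ qs))
  | cdc : ∀ {ps qs}, PrefixDisjoint (domOf ps) (domOf qs) →
      PUnion (.collDiamond ps) (.coll qs) (.collDiamond (ps ++ qs))
  | chch : ∀ {ps qs}, PrefixDisjoint (domOf ps) (domOf qs) →
      PUnion (.collHole ps) (.collHole qs) (.collHole (ps ++ qs))
  | chcd : ∀ {ps qs}, PrefixDisjoint (domOf ps) (domOf qs) →
      PUnion (.collHole ps) (.collDiamond qs) (.collHole (ps ++ qs))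
  | cdch : ∀ {ps qs}, PrefixDisjoint (domOf ps) (domOf qs) →
      PUnion (.collDiamond ps) (.collHole qs) (.collHole (ps ++ qs))
  | cdcd : ∀ {ps qs}, PrefixDisjoint (domOf ps) (domOf qs) →
      PUnion (.collDiamond ps) (.collDiamond qs) (.collDiamond (ps ++ qs))

open scoped Classical in
/-- Restriction `p|_L` of a set pattern: keep only the labeled components
whose label has a prefix in `L`. -/
noncomputable def Pattern.restrict (L : Set Label) : Pattern → Pattern
  | .coll ps => .coll (ps.filter fun q => decide (∃ y ∈ L, y <+: q.1))
  | .collHole ps => .collHole (ps.filter fun q => decide (∃ y ∈ L, y <+: q.1))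
  | .collDiamond ps => .collDiamond (ps.filter fun q => decide (∃ y ∈ L, y <+: q.1))
  | p => p

/-- Strip the prefix `ℓ` from `ℓ'`, if `ℓ` is a prefix of `ℓ'`. -/
def stripPrefix (ℓ ℓ' : Label) : Option Label :=
  if ℓ <+: ℓ' then some (ℓ'.drop ℓ.length) else none

/-- Set pattern projection `p[ℓ]`. -/
def Pattern.projL (ℓ : Label) : Pattern → Pattern
  | .hole => .hole
  | .diamond => .diamond
  | .coll ps => .coll (ps.filterMap fun q => (stripPrefix ℓ q.1).map ((·, q.2)))
  | .collHole ps =>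
      .collHole (ps.filterMap fun q => (stripPrefix ℓ q.1).map ((·, q.2)))
  | .collDiamond ps =>
      .collDiamond (ps.filterMap fun q => (stripPrefix ℓ q.1).map ((·, q.2)))
  | _ => .hole

/-- Singleton projection `p.ε`. -/
def Pattern.sngProj : Pattern → Pattern
  | .hole => .hole
  | .diamond => .diamond
  | .coll ps => (ps.lookup []).getD .hole
  | .collHole ps => (ps.lookup []).getD .hole
  | .collDiamond ps => (ps.lookup []).getD .diamond
  | _ => .hole

/-- Record pattern projection `p.A`. -/
def Pattern.projA (A : FName) : Pattern → Pattern
  | .hole => .hole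
  | .diamond => .diamond
  | .rcd ps => (ps.lookup A).getD .hole
  | .rcdHole ps => (ps.lookup A).getD .hole
  | .rcdDiamond ps => (ps.lookup A).getD .diamond
  | _ => .hole

lemma SimSubC.nil_any : ∀ a a' : List (Label × Value), SimSubC [] a a'
  | [], [] => .nil
  | (x :: a), a' => .skipL (SimSubC.nil_any a a')
  | [], (y :: a') => .skipR (SimSubC.nil_any [] a')

lemma SimSubEqC.refl : ∀ a : List (Label × Value), SimSubEqC [] a a
  | [] => .nil
  | (_ :: a) => .skip (SimSubEqC.refl a)

lemma SimSubC.ofList {ps a a'} (h : SimListC ps a a') : SimSubC ps a a' := by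
  induction a generalizing ps a' with
  | nil => cases h; exact .nil
  | cons x xs ih => cases h with
    | cons hp hl => exact .cons hp (ih hl)

lemma SimSubEqC.ofList {ps a a'} (h : SimListC ps a a') : SimSubEqC ps a a' := by
  induction a generalizing ps a' with
  | nil => cases h; exact .nil
  | cons x xs ih => cases h with
    | cons hp hl => exact .cons hp (ih hl)

lemma SimSubC.ofEq {ps a a'} (h : SimSubEqC ps a a') : SimSubC ps a a' := by
  induction a generalizing ps a' with
  | nil => cases h; exact .nil
  | cons x xs ih => cases h with
    | skip hl => exact .skipL (.skipR (ih hl))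
    | cons hp hl => exact .cons hp (ih hl)

lemma SimListC.append {ps qs a a' b b'} (h₁ : SimListC ps a a')
    (h₂ : SimListC qs b b') : SimListC (ps ++ qs) (a ++ b) (a' ++ b') := by
  induction a generalizing ps a' with
  | nil => cases h₁; exact h₂
  | cons x xs ih => cases h₁ with
    | cons hp hl => exact .cons hp (ih hl)

lemma SimSubC.append {ps qs a a' b b'} (h₁ : SimSubC ps a a')
    (h₂ : SimSubC qs b b') : SimSubC (ps ++ qs) (a ++ b) (a' ++ b') := by
  induction a generalizing ps a' with
  | nil =>
    induction a' generalizing ps with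
    | nil => cases h₁; exact h₂
    | cons y ys ih' => cases h₁ with
      | skipR h => exact .skipR (ih' h)
  | cons x xs ih =>
    induction a' generalizing ps with
    | nil => cases h₁ with
      | skipL h => exact .skipL (ih h)
    | cons y ys ih' => cases h₁ with
      | skipL h => exact .skipL (ih h)
      | skipR h => exact .skipR (ih' h)
      | cons hp h => exact .cons hp (ih h)

lemma SimSubEqC.append {ps qs a a' b b'} (h₁ : SimSubEqC ps a a')
    (h₂ : SimSubEqC qs b b') : SimSubEqC (ps ++ qs) (a ++ b) (a' ++ b') := by
  induction a generalizing ps a' with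
  | nil => cases h₁; exact h₂
  | cons x xs ih => cases h₁ with
    | skip h => exact .skip (ih h)
    | cons hp h => exact .cons hp (ih h)

lemma SimSubC.extend {ps a a'} (b b' : List (Label × Value))
    (h : SimSubC ps a a') : SimSubC ps (a ++ b) (a' ++ b') := by
  simpa using h.append (SimSubC.nil_any b b')

lemma SimSubC.prepend {ps a a'} (b b' : List (Label × Value))
    (h : SimSubC ps a a') : SimSubC ps (b ++ a) (b' ++ a') := by
  simpa using (SimSubC.nil_any b b').append h

lemma SimSubEqC.extend {ps a a'} (b : List (Label × Value))
    (h : SimSubEqC ps a a') : SimSubEqC ps (a ++ b) (a' ++ b) := by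
  simpa using h.append (SimSubEqC.refl b)

lemma SimSubEqC.prepend {ps a a'} (b : List (Label × Value))
    (h : SimSubEqC ps a a') : SimSubEqC ps (b ++ a) (b ++ a') := by
  simpa using (SimSubEqC.refl b).append h

/-- Lemma 4.4(1): pattern equivalence is compatible with disjoint union of
labeled collections. -/
theorem sim_punion
    (p₁ p₂ p : Pattern) (w₁ w₂ w₁' w₂' : List (Label × Value))
    (hm₁ : Matches p₁ (.coll w₁)) (hm₂ : Matches p₂ (.coll w₂))
    (hs₁ : Sim p₁ (.coll w₁) (.coll w₁')) (hs₂ : Sim p₂ (.coll w₂) (.coll w₂'))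
    (hu : PUnion p₁ p₂ p)
    (hc₁ : IsPrefixCode (domOf w₁)) (hc₂ : IsPrefixCode (domOf w₂))
    (hc₁' : IsPrefixCode (domOf w₁')) (hc₂' : IsPrefixCode (domOf w₂'))
    (hd : PrefixDisjoint (domOf w₁) (domOf w₂))
    (hd' : PrefixDisjoint (domOf w₁') (domOf w₂')) :
    Sim p (.coll (w₁ ++ w₂)) (.coll (w₁' ++ w₂')) := by
  cases hu <;>
    first
    | exact Sim.hole
    | (cases hs₁ <;> cases hs₂ <;>
        first
        | exact Sim.diamond
        | (rename_i h₁ h₂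
           first
           | exact Sim.coll (h₁.append h₂)
           | exact Sim.collHole ((SimSubC.ofList h₁).append (SimSubC.ofList h₂))
           | exact Sim.collHole ((SimSubC.ofList h₁).append h₂)
           | exact Sim.collHole (h₁.append (SimSubC.ofList h₂))
           | exact Sim.collHole (h₁.append h₂)
           | exact Sim.collHole ((SimSubC.ofList h₁).append (SimSubC.ofEq h₂))
           | exact Sim.collHole ((SimSubC.ofEq h₁).append (SimSubC.ofList h₂))
           | exact Sim.collHole (h₁.append (SimSubC.ofEq h₂))
           | exact Sim.collHole ((SimSubC.ofEq h₁).append h₂)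
           | exact Sim.collHole ((SimSubC.ofEq h₁).append (SimSubC.ofEq h₂))
           | exact Sim.collDiamond ((SimSubEqC.ofList h₁).append (SimSubEqC.ofList h₂))
           | exact Sim.collDiamond ((SimSubEqC.ofList h₁).append h₂)
           | exact Sim.collDiamond (h₁.append (SimSubEqC.ofList h₂))
           | exact Sim.collDiamond (h₁.append h₂))
        | (rename_i h₁
           first
           | exact Sim.collHole ((SimSubC.ofList h₁).extend _ _)
           | exact Sim.collHole ((SimSubC.ofList h₁).prepend _ _)
           | exact Sim.collHole (h₁.extend _ _)
           | exact Sim.collHole (h₁.prepend _ _)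
           | exact Sim.collHole ((SimSubC.ofEq h₁).extend _ _)
           | exact Sim.collHole ((SimSubC.ofEq h₁).prepend _ _)
           | exact Sim.collDiamond ((SimSubEqC.ofList h₁).extend _)
           | exact Sim.collDiamond ((SimSubEqC.ofList h₁).prepend _)
           | exact Sim.collDiamond (h₁.extend _)
           | exact Sim.collDiamond (h₁.prepend _)))
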